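/- For every r > 0, the function f(t) = c₀e^{−4t} + c₊e^{−u₊t} + c₋e^{−u₋t} + p² (with the coefficients as in the stationary JC+CpG expression of (C,C)(t)) is a bijection (indeed a diffeomorphism) from [0,∞) onto (p², p], where p = (4+r)/(16+5r). -/

import Mathlib

open Real Filter Set

/-- u = √(4+2r+r²). -/
noncomputable def uu (r : ℝ) : ℝ := Real.sqrt (4 + 2*r + r^2)

/-- Stationary frequency of C: p = (4+r)/(16+5r). -/
noncomputable def pC (r : ℝ) : ℝ := (4 + r) / (16 + 5*r)

/-- c₀ = (3+r)/(2(16+5r)). -/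
noncomputable def c0 (r : ℝ) : ℝ := (3 + r) / (2 * (16 + 5*r))

/-- c₊ = (3+r)(u(16+3r) − (32+14r+3r²))/(4u(16+5r)²). -/
noncomputable def cp (r : ℝ) : ℝ :=
  (3 + r) * (uu r * (16 + 3*r) - (32 + 14*r + 3*r^2)) / (4 * uu r * (16 + 5*r)^2)

/-- c₋ = (3+r)(u(16+3r) + (32+14r+3r²))/(4u(16+5r)²). -/
noncomputable def cm (r : ℝ) : ℝ :=
  (3 + r) * (uu r * (16 + 3*r) + (32 + 14*r + 3*r^2)) / (4 * uu r * (16 + 5*r)^2)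

/-- (C,C)(t) in the stationary JC+CpG model:
f(t) = c₀e^{−4t} + c₊e^{−u₊t} + c₋e^{−u₋t} + p². -/
noncomputable def fCC (r t : ℝ) : ℝ :=
  c0 r * Real.exp (-4 * t) + cp r * Real.exp (-(6 + r + uu r) * t)
    + cm r * Real.exp (-(6 + r - uu r) * t) + (pC r)^2

lemma uu_pos (r : ℝ) (hr : 0 < r) : 0 < uu r := Real.sqrt_pos.mpr (by nlinarith)

lemma uu_sq (r : ℝ) (hr : 0 < r) : uu r ^ 2 = 4 + 2*r + r^2 := Real.sq_sqrt (by nlinarith)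

lemma uu_lt (r : ℝ) (hr : 0 < r) : uu r < 6 + r := by
  have h1 := uu_sq r hr
  nlinarith [uu_pos r hr]

lemma c0_pos (r : ℝ) (hr : 0 < r) : 0 < c0 r := by
  unfold c0; positivity

lemma cp_pos (r : ℝ) (hr : 0 < r) : 0 < cp r := by
  unfold cp
  have hu := uu_pos r hr
  have hu2 := uu_sq r hr
  have h16 : (0:ℝ) < 16 + 3*r := by linarith
  have hsq : (uu r * (16 + 3*r))^2 = (4 + 2*r + r^2) * (16 + 3*r)^2 := by
    rw [mul_pow, hu2]
  have hnum : 0 < uu r * (16 + 3*r) - (32 + 14*r + 3*r^2) := by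
    nlinarith [hsq, mul_pos hu h16, sq_nonneg (uu r * (16 + 3*r) - (32 + 14*r + 3*r^2))]
  have hden : (0:ℝ) < 4 * uu r * (16 + 5*r)^2 := by positivity
  exact div_pos (by nlinarith) hden

lemma cm_pos (r : ℝ) (hr : 0 < r) : 0 < cm r := by
  unfold cm
  have hu := uu_pos r hr
  have hden : (0:ℝ) < 4 * uu r * (16 + 5*r)^2 := by positivity
  exact div_pos (by nlinarith) hden

lemma sum_c (r : ℝ) (hr : 0 < r) : c0 r + cp r + cm r = pC r - (pC r)^2 := by
  have hu := uu_pos r hr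
  unfold c0 cp cm pC
  field_simp
  ring

lemma fCC_hasDeriv (r t : ℝ) : HasDerivAt (fCC r)
    (c0 r * (-4 * Real.exp (-4 * t)) + cp r * (-(6 + r + uu r) * Real.exp (-(6 + r + uu r) * t))
      + cm r * (-(6 + r - uu r) * Real.exp (-(6 + r - uu r) * t))) t := by
  have h : ∀ k : ℝ, HasDerivAt (fun t : ℝ => Real.exp (k * t)) (k * Real.exp (k * t)) t := by
    intro k
    have h1 : HasDerivAt (fun t : ℝ => k * t) k t := by
      simpa using (hasDerivAt_id t).const_mul k
    have h2 := h1.exp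
    rw [mul_comm (Real.exp (k * t)) k] at h2
    exact h2
  have H := ((((h (-4)).const_mul (c0 r)).add ((h (-(6 + r + uu r))).const_mul (cp r))).add
      ((h (-(6 + r - uu r))).const_mul (cm r))).add_const ((pC r)^2)
  exact H

lemma fCC_deriv_neg (r : ℝ) (hr : 0 < r) (t : ℝ) : deriv (fCC r) t < 0 := by
  rw [(fCC_hasDeriv r t).deriv]
  have h0 := c0_pos r hr
  have hp := cp_pos r hr
  have hm := cm_pos r hr
  have hu := uu_pos r hr
  have hul := uu_lt r hr
  have e1 := Real.exp_pos (-4 * t)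
  have e2 := Real.exp_pos (-(6 + r + uu r) * t)
  have e3 := Real.exp_pos (-(6 + r - uu r) * t)
  nlinarith [mul_pos h0 e1, mul_pos hp e2, mul_pos hm e3,
    mul_pos (mul_pos hp e2) hu, mul_pos (mul_pos hm e3) hu]

lemma fCC_strictAnti (r : ℝ) (hr : 0 < r) : StrictAnti (fCC r) :=
  strictAnti_of_deriv_neg (fun t => fCC_deriv_neg r hr t)

lemma fCC_zero (r : ℝ) (hr : 0 < r) : fCC r 0 = pC r := by
  have h := sum_c r hr
  simp only [fCC, mul_zero, Real.exp_zero, mul_one]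
  linarith

lemma fCC_gt (r : ℝ) (hr : 0 < r) (t : ℝ) : (pC r)^2 < fCC r t := by
  have h0 := c0_pos r hr
  have hp := cp_pos r hr
  have hm := cm_pos r hr
  have e1 := Real.exp_pos (-4 * t)
  have e2 := Real.exp_pos (-(6 + r + uu r) * t)
  have e3 := Real.exp_pos (-(6 + r - uu r) * t)
  unfold fCC
  nlinarith [mul_pos h0 e1, mul_pos hp e2, mul_pos hm e3]

lemma fCC_tendsto (r : ℝ) (hr : 0 < r) : Tendsto (fCC r) atTop (nhds ((pC r)^2)) := by
  have key : ∀ k : ℝ, k < 0 → Tendsto (fun t : ℝ => Real.exp (k * t)) atTop (nhds 0) := by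
    intro k hk
    apply Real.tendsto_exp_atBot.comp
    exact tendsto_id.const_mul_atTop_of_neg hk
  have hu := uu_pos r hr
  have hul := uu_lt r hr
  have h1 := (key (-4) (by norm_num)).const_mul (c0 r)
  have h2 := (key (-(6 + r + uu r)) (by linarith)).const_mul (cp r)
  have h3 := (key (-(6 + r - uu r)) (by linarith)).const_mul (cm r)
  have H := ((h1.add h2).add h3).const_add ((pC r)^2)
  have : (pC r)^2 + (c0 r * 0 + cp r * 0 + cm r * 0) = (pC r)^2 := by ring
  rw [this] at H
  refine H.congr fun t => ?_
  simp only [fCC]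
  ring

/-- f is a diffeomorphism (in particular a bijection) from [0,∞) onto (p², p]. -/
theorem stmt9 (r : ℝ) (hr : 0 < r) :
    Set.BijOn (fCC r) (Ici 0) (Ioc ((pC r)^2) (pC r)) ∧
    (∀ t : ℝ, DifferentiableAt ℝ (fCC r) t) ∧
    ∀ t : ℝ, deriv (fCC r) t ≠ 0 := by
  have hd : ∀ t, DifferentiableAt ℝ (fCC r) t := fun t => (fCC_hasDeriv r t).differentiableAt
  have hanti := fCC_strictAnti r hr
  have hcont : Continuous (fCC r) := Differentiable.continuous (fun t => hd t)
  refine ⟨⟨?_, ?_, ?_⟩, hd, fun t => (fCC_deriv_neg r hr t).ne⟩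
  · intro t ht
    refine ⟨fCC_gt r hr t, ?_⟩
    calc fCC r t ≤ fCC r 0 := hanti.antitone ht
    _ = pC r := fCC_zero r hr
  · exact hanti.injective.injOn
  · intro y hy
    obtain ⟨hy1, hy2⟩ := hy
    have hev : ∀ᶠ t in atTop, fCC r t < y :=
      (fCC_tendsto r hr).eventually_lt_const hy1
    obtain ⟨T, hT⟩ := (hev.and (eventually_ge_atTop (0:ℝ))).exists
    obtain ⟨hTy, hT0⟩ := hT
    have hIVT := intermediate_value_Icc' hT0 hcont.continuousOn
    have hy' : y ∈ Icc (fCC r T) (fCC r 0) := ⟨hTy.le, by rw [fCC_zero r hr]; exact hy2⟩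
    obtain ⟨t, ht, hft⟩ := hIVT hy'
    exact ⟨t, ht.1, hft⟩
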